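/- Let A = {P^A_i} and B = {P^B_j} be projective observables on ℂ^d. Then Q_F(A→B) = 0 if and only if P^A_i P^B_j = P^B_j P^A_i for all i and j. -/

import Mathlib

open scoped BigOperators ComplexOrder
open Matrix

noncomputable section

/-- A projective observable: a finite family of mutually orthogonal
self-adjoint idempotents summing to the identity. -/
def IsProjObs {d r : ℕ} (P : Fin r → Matrix (Fin d) (Fin d) ℂ) : Prop :=
  (∀ i, (P i).IsHermitian) ∧ (∀ i, P i * P i = P i) ∧
    (∀ i k, i ≠ k → P i * P k = 0) ∧ (∑ i, P i = 1)

/-- A density matrix: positive semidefinite with unit trace. -/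
def IsDensity {d : ℕ} (ρ : Matrix (Fin d) (Fin d) ℂ) : Prop :=
  ρ.PosSemidef ∧ ρ.trace = 1

/-- The measurement channel `E^A(ρ) = Σ_i P_i ρ P_i` of a projective observable. -/
def measChannel {d r : ℕ} (P : Fin r → Matrix (Fin d) (Fin d) ℂ)
    (ρ : Matrix (Fin d) (Fin d) ℂ) : Matrix (Fin d) (Fin d) ℂ :=
  ∑ i, P i * ρ * P i

/-- `p^B_ρ(j) = tr(P^B_j ρ)`. -/
def probB {d rB : ℕ} (Q : Fin rB → Matrix (Fin d) (Fin d) ℂ)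
    (ρ : Matrix (Fin d) (Fin d) ℂ) (j : Fin rB) : ℝ :=
  ((Q j * ρ).trace).re

/-- `q^{A→B}_ρ(j) = tr(P^B_j Σ_i P^A_i ρ P^A_i)`. -/
def probAB {d rA rB : ℕ} (P : Fin rA → Matrix (Fin d) (Fin d) ℂ)
    (Q : Fin rB → Matrix (Fin d) (Fin d) ℂ)
    (ρ : Matrix (Fin d) (Fin d) ℂ) (j : Fin rB) : ℝ :=
  ((Q j * measChannel P ρ).trace).re

open Classical in
/-- The positive semidefinite square root of a PSD matrix (junk value `0` otherwise). -/
noncomputable def msqrt {d : ℕ} (A : Matrix (Fin d) (Fin d) ℂ) :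
    Matrix (Fin d) (Fin d) ℂ :=
  if h : A.PosSemidef then
    (h.1.eigenvectorUnitary : Matrix (Fin d) (Fin d) ℂ) *
      Matrix.diagonal (((↑) : ℝ → ℂ) ∘ Real.sqrt ∘ h.1.eigenvalues) *
      (star h.1.eigenvectorUnitary : Matrix (Fin d) (Fin d) ℂ)
  else 0

/-- `|X| = √(Xᴴ X)`, the positive semidefinite absolute value of a matrix. -/
noncomputable def matAbs {d : ℕ} (X : Matrix (Fin d) (Fin d) ℂ) :
    Matrix (Fin d) (Fin d) ℂ :=
  msqrt (Xᴴ * X)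

/-- The quantum fidelity `F(ρ,σ) = tr √(√ρ σ √ρ)`. -/
noncomputable def qFid {d : ℕ} (ρ σ : Matrix (Fin d) (Fin d) ℂ) : ℝ :=
  ((msqrt (msqrt ρ * σ * msqrt ρ)).trace).re

/-- Variational distance `D_1(p,q) = (1/2) Σ_j |p_j − q_j|`. -/
def distL1 {rB : ℕ} (p q : Fin rB → ℝ) : ℝ := (1 / 2) * ∑ j, |p j - q j|

/-- Chebyshev distance `D_∞(p,q) = max_j |p_j − q_j|`. -/
noncomputable def distLinf {rB : ℕ} (p q : Fin rB → ℝ) : ℝ := ⨆ j, |p j - q j|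

/-- Classical fidelity `F(p,q) = Σ_j √(p_j q_j)`. -/
noncomputable def classFid {rB : ℕ} (p q : Fin rB → ℝ) : ℝ :=
  ∑ j, Real.sqrt (p j * q j)

/-- `Q_1(A→B)`. -/
noncomputable def Q1 {d rA rB : ℕ} (P : Fin rA → Matrix (Fin d) (Fin d) ℂ)
    (Q : Fin rB → Matrix (Fin d) (Fin d) ℂ) : ℝ :=
  sSup {x : ℝ | ∃ ρ, IsDensity ρ ∧ x = distL1 (probAB P Q ρ) (probB Q ρ)}

/-- `Q_∞(A→B)`. -/
noncomputable def Qinf {d rA rB : ℕ} (P : Fin rA → Matrix (Fin d) (Fin d) ℂ)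
    (Q : Fin rB → Matrix (Fin d) (Fin d) ℂ) : ℝ :=
  sSup {x : ℝ | ∃ ρ, IsDensity ρ ∧ x = distLinf (probAB P Q ρ) (probB Q ρ)}

/-- `Q_F(A→B)`. -/
noncomputable def QF {d rA rB : ℕ} (P : Fin rA → Matrix (Fin d) (Fin d) ℂ)
    (Q : Fin rB → Matrix (Fin d) (Fin d) ℂ) : ℝ :=
  sSup {x : ℝ | ∃ ρ, IsDensity ρ ∧
    x = 1 - (classFid (probAB P Q ρ) (probB Q ρ)) ^ 2}

/-- The rank-one projection `|v⟩⟨v|` onto a (unit) vector `v`. -/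
def proj {d : ℕ} (v : Fin d → ℂ) : Matrix (Fin d) (Fin d) ℂ :=
  Matrix.vecMulVec v (star v)

section Helpers
variable {d rA rB : ℕ}

lemma psd_diag_nonneg {ρ : Matrix (Fin d) (Fin d) ℂ} (h : ρ.PosSemidef) (i : Fin d) :
    0 ≤ ρ i i := by
  have := h.dotProduct_mulVec_nonneg (Pi.single i 1)
  simpa [Matrix.mulVec_single, dotProduct, Pi.single_apply, apply_ite] using this

lemma psd_trace_re_nonneg {ρ : Matrix (Fin d) (Fin d) ℂ} (h : ρ.PosSemidef) :
    0 ≤ ρ.trace.re := by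
  have h1 : 0 ≤ ρ.trace := Finset.sum_nonneg fun i _ => psd_diag_nonneg h i
  exact (Complex.nonneg_iff.mp h1).1

lemma trace_mul_proj (M : Matrix (Fin d) (Fin d) ℂ) (v : Fin d → ℂ) :
    (M * proj v).trace = star v ⬝ᵥ M *ᵥ v := by
  simp only [proj, Matrix.trace, Matrix.diag, Matrix.mul_apply, Matrix.vecMulVec_apply,
    Matrix.mulVec, dotProduct, Pi.star_apply, Finset.mul_sum, Finset.sum_mul]
  exact Finset.sum_congr rfl fun i _ => Finset.sum_congr rfl fun k _ => by ring

lemma trace_proj (v : Fin d → ℂ) :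
    (proj v).trace = ((∑ i, Complex.normSq (v i) : ℝ) : ℂ) := by
  simp only [proj, Matrix.trace, Matrix.diag, Matrix.vecMulVec_apply, Pi.star_apply]
  push_cast
  exact Finset.sum_congr rfl fun i _ => (Complex.mul_conj (v i)).symm ▸ rfl

lemma proj_psd (v : Fin d → ℂ) : (proj v).PosSemidef := by
  refine Matrix.PosSemidef.of_dotProduct_mulVec_nonneg ?_ ?_
  · ext i j
    simp [proj, Matrix.conjTranspose_apply, Matrix.vecMulVec_apply, mul_comm]
  · intro x
    have h : star x ⬝ᵥ (proj v *ᵥ x) = star (star v ⬝ᵥ x) * (star v ⬝ᵥ x) := by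
      simp only [proj, Matrix.mulVec, dotProduct, Matrix.vecMulVec_apply, Pi.star_apply,
        star_sum, star_mul', star_star, Finset.mul_sum, Finset.sum_mul]
      rw [Finset.sum_comm]
      exact Finset.sum_congr rfl fun i _ => Finset.sum_congr rfl fun k _ => by ring
    rw [h]
    exact star_mul_self_nonneg _

lemma smul_psd {c : ℝ} (hc : 0 ≤ c) {N : Matrix (Fin d) (Fin d) ℂ} (hN : N.PosSemidef) :
    ((c : ℂ) • N).PosSemidef := by
  refine Matrix.PosSemidef.of_dotProduct_mulVec_nonneg ?_ ?_
  · show ((c:ℂ) • N)ᴴ = _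
    rw [Matrix.conjTranspose_smul, Complex.star_def, Complex.conj_ofReal, hN.1.eq]
  · intro x
    rw [Matrix.smul_mulVec, dotProduct_smul]
    have := hN.dotProduct_mulVec_nonneg x
    rw [smul_eq_mul]
    exact mul_nonneg (by exact_mod_cast Complex.zero_le_real.mpr hc) this

/-- A Hermitian matrix with zero trace pairing against all densities is zero. -/
lemma herm_eq_zero {d : ℕ} {M : Matrix (Fin d) (Fin d) ℂ} (hM : M.IsHermitian)
    (h : ∀ ρ, IsDensity ρ → (M * ρ).trace = 0) : M = 0 := by
  have hform : ∀ v : Fin d → ℂ, star v ⬝ᵥ M *ᵥ v = 0 := by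
    intro v
    by_cases hv : v = 0
    · simp [hv]
    · obtain ⟨i0, hi0⟩ := Function.ne_iff.mp hv
      set c : ℝ := ∑ i, Complex.normSq (v i) with hc
      have hcpos : 0 < c :=
        Finset.sum_pos' (fun _ _ => Complex.normSq_nonneg _)
          ⟨i0, Finset.mem_univ i0, Complex.normSq_pos.mpr hi0⟩
      have hρd : IsDensity (((c : ℝ)⁻¹ : ℂ) • proj v) := by
        constructor
        · exact_mod_cast smul_psd (by positivity) (proj_psd v)
        · rw [Matrix.trace_smul, trace_proj, ← hc, smul_eq_mul]
          exact_mod_cast inv_mul_cancel₀ (ne_of_gt hcpos)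
      have h0 := h _ hρd
      rw [Matrix.mul_smul, Matrix.trace_smul, trace_mul_proj, smul_eq_mul,
        mul_eq_zero] at h0
      rcases h0 with h0 | h0
      · exact absurd h0 (by simp [ne_of_gt hcpos])
      · exact h0
  have hpsd : M.PosSemidef := Matrix.PosSemidef.of_dotProduct_mulVec_nonneg hM fun x => (hform x).ge
  have hmv : ∀ x, M *ᵥ x = 0 := fun x => (hpsd.dotProduct_mulVec_zero_iff x).mp (hform x)
  ext i j
  have := congrFun (hmv (Pi.single j 1)) i
  simpa [Matrix.mulVec_single] using this

/-- Classical fidelity at least one forces equal distributions. -/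
lemma eq_of_one_le_classFid {n : ℕ} {p q : Fin n → ℝ} (hp : ∀ j, 0 ≤ p j) (hq : ∀ j, 0 ≤ q j)
    (hps : ∑ j, p j = 1) (hqs : ∑ j, q j = 1) (hF : 1 ≤ classFid p q) : p = q := by
  have hterm : ∀ j, Real.sqrt (p j * q j) ≤ (p j + q j) / 2 := by
    intro j
    rw [Real.sqrt_mul (hp j)]
    nlinarith [sq_nonneg (Real.sqrt (p j) - Real.sqrt (q j)), Real.sq_sqrt (hp j),
      Real.sq_sqrt (hq j), Real.sqrt_nonneg (p j), Real.sqrt_nonneg (q j)]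
  have hsum : ∑ j, ((p j + q j) / 2 - Real.sqrt (p j * q j)) = 0 := by
    have hle : ∑ j, ((p j + q j) / 2 - Real.sqrt (p j * q j)) ≤ 0 := by
      have : ∑ j, ((p j + q j) / 2 - Real.sqrt (p j * q j)) = 1 - classFid p q := by
        rw [Finset.sum_sub_distrib]
        unfold classFid
        rw [show ∑ j, (p j + q j) / 2 = 1 from by
          rw [← Finset.sum_div, Finset.sum_add_distrib, hps, hqs]; norm_num]
      linarith [this]
    exact le_antisymm hle (Finset.sum_nonneg fun j _ => by linarith [hterm j])
  have hzero := (Finset.sum_eq_zero_iff_of_nonneg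
    (fun j _ => by linarith [hterm j])).mp hsum
  funext j
  have hz := hzero j (Finset.mem_univ j)
  have h1 : Real.sqrt (p j) * Real.sqrt (q j) = (p j + q j) / 2 := by
    rw [← Real.sqrt_mul (hp j)]; linarith
  nlinarith [sq_nonneg (Real.sqrt (p j) - Real.sqrt (q j)), Real.sq_sqrt (hp j),
    Real.sq_sqrt (hq j)]

lemma classFid_self {n : ℕ} {p : Fin n → ℝ} (hp : ∀ j, 0 ≤ p j) (hs : ∑ j, p j = 1) :
    classFid p p = 1 := by
  unfold classFid
  rw [← hs]
  exact Finset.sum_congr rfl fun j _ => Real.sqrt_mul_self (hp j)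

lemma probB_nonneg {d rB : ℕ} {Q : Fin rB → Matrix (Fin d) (Fin d) ℂ} (hQ : IsProjObs Q)
    {ρ : Matrix (Fin d) (Fin d) ℂ} (hρ : ρ.PosSemidef) (j : Fin rB) : 0 ≤ probB Q ρ j := by
  have key : (Q j * ρ * (Q j)ᴴ).trace = (Q j * ρ).trace := by
    rw [Matrix.trace_mul_comm, (hQ.1 j).eq, ← Matrix.mul_assoc, hQ.2.1 j]
  have : 0 ≤ (Q j * ρ * (Q j)ᴴ).trace.re :=
    psd_trace_re_nonneg (hρ.mul_mul_conjTranspose_same (Q j))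
  rwa [key] at this

lemma probB_sum {d rB : ℕ} {Q : Fin rB → Matrix (Fin d) (Fin d) ℂ} (hQ : IsProjObs Q)
    {ρ : Matrix (Fin d) (Fin d) ℂ} (hρ : IsDensity ρ) : ∑ j, probB Q ρ j = 1 := by
  have h : (∑ j, (Q j * ρ).trace) = ρ.trace := by
    rw [← Matrix.trace_sum, ← Finset.sum_mul, hQ.2.2.2, one_mul]
  have h2 : ∑ j, probB Q ρ j = (∑ j, (Q j * ρ).trace).re := by
    unfold probB
    exact (Complex.re_sum Finset.univ _).symm
  rw [h2, h, hρ.2, Complex.one_re]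

lemma measChannel_psd {d rA : ℕ} {P : Fin rA → Matrix (Fin d) (Fin d) ℂ} (hP : IsProjObs P)
    {ρ : Matrix (Fin d) (Fin d) ℂ} (h : ρ.PosSemidef) : (measChannel P ρ).PosSemidef := by
  have hterm : ∀ i : Fin rA, (P i * ρ * P i).PosSemidef := by
    intro i
    have := h.mul_mul_conjTranspose_same (P i)
    rwa [(hP.1 i).eq] at this
  exact Finset.sum_induction _ _ (fun a b ha hb => ha.add hb) Matrix.PosSemidef.zero
    (fun i _ => hterm i)

lemma measChannel_trace {d rA : ℕ} {P : Fin rA → Matrix (Fin d) (Fin d) ℂ} (hP : IsProjObs P)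
    (ρ : Matrix (Fin d) (Fin d) ℂ) : (measChannel P ρ).trace = ρ.trace := by
  unfold measChannel
  rw [Matrix.trace_sum]
  have h : ∀ i : Fin rA, (P i * ρ * P i).trace = (P i * ρ).trace := by
    intro i
    rw [Matrix.trace_mul_comm, ← Matrix.mul_assoc, hP.2.1 i]
  rw [Finset.sum_congr rfl fun i _ => h i, ← Matrix.trace_sum, ← Finset.sum_mul,
    hP.2.2.2, one_mul]

lemma measChannel_density {d rA : ℕ} {P : Fin rA → Matrix (Fin d) (Fin d) ℂ} (hP : IsProjObs P)
    {ρ : Matrix (Fin d) (Fin d) ℂ} (h : IsDensity ρ) : IsDensity (measChannel P ρ) :=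
  ⟨measChannel_psd hP h.1, by rw [measChannel_trace hP, h.2]⟩

lemma probAB_eq_trace {d rA rB : ℕ} (P : Fin rA → Matrix (Fin d) (Fin d) ℂ)
    (Q : Fin rB → Matrix (Fin d) (Fin d) ℂ) (ρ : Matrix (Fin d) (Fin d) ℂ) (j : Fin rB) :
    probAB P Q ρ j = (((∑ i, P i * Q j * P i) * ρ)).trace.re := by
  unfold probAB measChannel
  congr 1
  rw [Finset.mul_sum, Matrix.trace_sum, Finset.sum_mul, Matrix.trace_sum]
  refine Finset.sum_congr rfl fun i _ => ?_
  rw [← Matrix.mul_assoc, Matrix.trace_mul_comm, ← Matrix.mul_assoc, ← Matrix.mul_assoc]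

end Helpers

theorem stmt_2 {d rA rB : ℕ} (hd : 0 < d)
    (P : Fin rA → Matrix (Fin d) (Fin d) ℂ) (Q : Fin rB → Matrix (Fin d) (Fin d) ℂ)
    (hP : IsProjObs P) (hQ : IsProjObs Q) :
    QF P Q = 0 ↔ (∀ i j, P i * Q j = Q j * P i) := by
  have probAB_nonneg : ∀ ρ, IsDensity ρ → ∀ j, 0 ≤ probAB P Q ρ j := fun ρ hρ j =>
    probB_nonneg hQ (measChannel_psd hP hρ.1) j
  have probAB_sum : ∀ ρ, IsDensity ρ → ∑ j, probAB P Q ρ j = 1 := fun ρ hρ =>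
    probB_sum hQ (measChannel_density hP hρ)
  constructor
  · intro hQF
    unfold QF at hQF
    have hbdd : BddAbove {x : ℝ | ∃ ρ, IsDensity ρ ∧
        x = 1 - (classFid (probAB P Q ρ) (probB Q ρ)) ^ 2} := by
      refine ⟨1, fun x hx => ?_⟩
      obtain ⟨σ, hσ, rfl⟩ := hx
      nlinarith [sq_nonneg (classFid (probAB P Q σ) (probB Q σ))]
    have hprob : ∀ ρ, IsDensity ρ → probAB P Q ρ = probB Q ρ := by
      intro ρ hρ
      have hle : 1 - classFid (probAB P Q ρ) (probB Q ρ) ^ 2 ≤ 0 := by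
        have := le_csSup hbdd (show (1 - classFid (probAB P Q ρ) (probB Q ρ) ^ 2) ∈
          {x : ℝ | ∃ ρ, IsDensity ρ ∧ x = 1 - (classFid (probAB P Q ρ) (probB Q ρ)) ^ 2}
          from ⟨ρ, hρ, rfl⟩)
        rw [hQF] at this
        exact this
      have hFnn : 0 ≤ classFid (probAB P Q ρ) (probB Q ρ) :=
        Finset.sum_nonneg fun j _ => Real.sqrt_nonneg _
      have hF1 : 1 ≤ classFid (probAB P Q ρ) (probB Q ρ) := by nlinarith
      exact eq_of_one_le_classFid (probAB_nonneg ρ hρ) (fun j => probB_nonneg hQ hρ.1 j)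
        (probAB_sum ρ hρ) (probB_sum hQ hρ) hF1
    intro i j
    -- Step 2: show ∑ i, P i * Q j * P i = Q j
    set M := (∑ i, P i * Q j * P i) - Q j with hMdef
    have hMH : M.IsHermitian := by
      show Mᴴ = M
      rw [hMdef, Matrix.conjTranspose_sub, Matrix.conjTranspose_sum, (hQ.1 j).eq]
      congr 1
      refine Finset.sum_congr rfl fun k _ => ?_
      rw [Matrix.conjTranspose_mul, Matrix.conjTranspose_mul, (hP.1 k).eq, (hQ.1 j).eq,
        ← Matrix.mul_assoc]
    have htr : ∀ ρ, IsDensity ρ → (M * ρ).trace = 0 := by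
      intro ρ hρ
      have h1 : probAB P Q ρ j = probB Q ρ j := congrFun (hprob ρ hρ) j
      rw [probAB_eq_trace] at h1
      have hre : ((M * ρ).trace).re = 0 := by
        rw [hMdef, Matrix.sub_mul, Matrix.trace_sub, Complex.sub_re]
        unfold probB at h1
        linarith
      have hreal : star ((M * ρ).trace) = (M * ρ).trace := by
        rw [← Matrix.trace_conjTranspose, Matrix.conjTranspose_mul, hρ.1.1.eq, hMH.eq,
          Matrix.trace_mul_comm]
      have him : ((M * ρ).trace).im = 0 := by
        have h2 := congrArg Complex.im hreal
        rw [Complex.star_def, Complex.conj_im] at h2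
        linarith
      exact Complex.ext (by simpa using hre) (by simpa using him)
    have hsum : (∑ k, P k * Q j * P k) = Q j := by
      have := herm_eq_zero hMH htr
      rw [hMdef, sub_eq_zero] at this
      exact this
    have hL : P i * Q j * P i = P i * Q j := by
      have h3 := congrArg (fun X => P i * X) hsum
      simp only [Finset.mul_sum] at h3
      rw [Finset.sum_eq_single i
        (fun k _ hk => by
          rw [← Matrix.mul_assoc, ← Matrix.mul_assoc, hP.2.2.1 i k (Ne.symm hk),
            Matrix.zero_mul, Matrix.zero_mul])
        (fun h => absurd (Finset.mem_univ i) h)] at h3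
      rw [← Matrix.mul_assoc, ← Matrix.mul_assoc, hP.2.1 i] at h3
      exact h3
    have hR : P i * Q j * P i = Q j * P i := by
      have h3 := congrArg (fun X => X * P i) hsum
      simp only [Finset.sum_mul] at h3
      rw [Finset.sum_eq_single i
        (fun k _ hk => by
          rw [Matrix.mul_assoc, hP.2.2.1 k i hk, Matrix.mul_zero])
        (fun h => absurd (Finset.mem_univ i) h)] at h3
      rw [Matrix.mul_assoc, Matrix.mul_assoc, hP.2.1 i, ← Matrix.mul_assoc] at h3
      exact h3
    rw [← hL, hR]
  · intro hcomm
    have hQj : ∀ j, (∑ i, P i * Q j * P i) = Q j := by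
      intro j
      have hterm : ∀ i, P i * Q j * P i = Q j * P i := fun i => by
        rw [hcomm i j, Matrix.mul_assoc, hP.2.1 i]
      rw [Finset.sum_congr rfl fun i _ => hterm i, ← Finset.mul_sum, hP.2.2.2, mul_one]
    have hprob : ∀ ρ, IsDensity ρ → probAB P Q ρ = probB Q ρ := by
      intro ρ hρ
      funext j
      rw [probAB_eq_trace, hQj j]
      rfl
    have hρ0 : IsDensity ((((d : ℝ)⁻¹ : ℝ) : ℂ) • (1 : Matrix (Fin d) (Fin d) ℂ)) := by
      constructor
      · exact smul_psd (by positivity) Matrix.PosSemidef.one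
      · rw [Matrix.trace_smul, Matrix.trace_one, smul_eq_mul]
        have hdne : (d : ℂ) ≠ 0 := Nat.cast_ne_zero.mpr hd.ne'
        push_cast
        simp [Fintype.card_fin]
        exact inv_mul_cancel₀ hdne
    have hset : {x : ℝ | ∃ ρ, IsDensity ρ ∧
        x = 1 - (classFid (probAB P Q ρ) (probB Q ρ)) ^ 2} = {0} := by
      ext x
      simp only [Set.mem_setOf_eq, Set.mem_singleton_iff]
      constructor
      · rintro ⟨ρ, hρ, rfl⟩
        rw [hprob ρ hρ, classFid_self (fun j => probB_nonneg hQ hρ.1 j) (probB_sum hQ hρ)]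
        norm_num
      · rintro rfl
        refine ⟨_, hρ0, ?_⟩
        rw [hprob _ hρ0, classFid_self (fun j => probB_nonneg hQ hρ0.1 j) (probB_sum hQ hρ0)]
        norm_num
    unfold QF
    rw [hset, csSup_singleton]

end
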